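/- Let X be a T₁ topological space that is not countably compact, and suppose that no cardinal μ ≤ d(X) is weakly inaccessible (i.e., every uncountable regular cardinal μ ≤ d(X) is not a limit cardinal). Then the product space X^{d(X)} is e-separable. -/

import Mathlib

open Cardinal Set

universe u

/-- A subset `D` of a topological space is closed discrete iff it is closed and
its subspace topology is discrete. -/
def ClosedDiscrete {X : Type u} [TopologicalSpace X] (D : Set X) : Prop :=
  IsClosed D ∧ DiscreteTopology D

/-- A space is `e`-separable iff it has a dense set which is a countable union of
closed discrete sets. -/
def ESeparable (X : Type u) [TopologicalSpace X] : Prop :=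
  ∃ D : ℕ → Set X, (∀ n, ClosedDiscrete (D n)) ∧ Dense (⋃ n, D n)

/-- The density of a space: the least cardinality of a dense subset. -/
noncomputable def density (X : Type u) [TopologicalSpace X] : Cardinal.{u} :=
  sInf {c | ∃ D : Set X, Dense D ∧ #D = c}

/-- The extent of a space: the supremum of the cardinalities of closed discrete subsets. -/
noncomputable def extent (X : Type u) [TopologicalSpace X] : Cardinal.{u} :=
  sSup {c | ∃ D : Set X, ClosedDiscrete D ∧ #D = c}

/-- A space is countably compact iff every countable open cover has a finite subcover. -/
def CountablyCompact (X : Type u) [TopologicalSpace X] : Prop :=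
  ∀ 𝒰 : Set (Set X), 𝒰.Countable → (∀ U ∈ 𝒰, IsOpen U) → ⋃₀ 𝒰 = Set.univ →
    ∃ 𝒱 ⊆ 𝒰, 𝒱.Finite ∧ ⋃₀ 𝒱 = Set.univ

/-- A "closed discrete family": for every point `w` of the product `ℕ^I` there is a
finite set of coordinates on which at most one member of the family agrees with `w`. -/
def CDFam {ι I : Type u} (F : ι → I → ℕ) : Prop :=
  ∀ w : I → ℕ, ∃ C : Finset I, {α | ∀ c ∈ C, F α c = w c}.Subsingleton

lemma cdfam_base : CDFam (fun (n _ : ULift.{u} ℕ) => n.down) := by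
  intro w
  refine ⟨{⟨0⟩}, ?_⟩
  intro a ha b hb
  simp only [Finset.mem_singleton, mem_setOf_eq] at ha hb
  have h1 := ha ⟨0⟩ rfl
  have h2 := hb ⟨0⟩ rfl
  cases a; cases b; simp_all

/-- The successor-step family. -/
def succFam {ιl Il T : Type u} [LinearOrder T]
    (g : ιl → Il → ℕ) (emb : ∀ t : T, {x : T // x < t} ↪ ιl) :
    T → Bool × T × Il → ℕ :=
  fun α q =>
    match q with
    | (true, ξ, c) => if h : α < ξ then g (emb ξ ⟨α, h⟩) c + 1 else 0
    | (false, ξ, c) => if h : ξ < α then g (emb α ⟨ξ, h⟩) c + 1 else 0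

lemma succFam_true {ιl Il T : Type u} [LinearOrder T]
    (g : ιl → Il → ℕ) (emb : ∀ t : T, {x : T // x < t} ↪ ιl) (α ξ : T) (c : Il) :
    succFam g emb α (true, ξ, c) = if h : α < ξ then g (emb ξ ⟨α, h⟩) c + 1 else 0 := rfl

lemma succFam_false {ιl Il T : Type u} [LinearOrder T]
    (g : ιl → Il → ℕ) (emb : ∀ t : T, {x : T // x < t} ↪ ιl) (α ξ : T) (c : Il) :
    succFam g emb α (false, ξ, c) = if h : ξ < α then g (emb α ⟨ξ, h⟩) c + 1 else 0 := rfl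

lemma cdfam_succ {ιl Il T : Type u} [LinearOrder T]
    (g : ιl → Il → ℕ) (hg : CDFam g) (c₀ : Il)
    (nomax : ∀ t : T, ∃ t', t < t')
    (emb : ∀ t : T, {x : T // x < t} ↪ ιl)
    (hbig : ∀ f : T → ιl, ¬ Function.Injective f) :
    CDFam (succFam g emb) := by
  classical
  intro w
  by_cases hA : ∃ ξ c, w (true, ξ, c) ≠ 0
  · obtain ⟨ξ, c₁, hc₁⟩ := hA
    by_cases hA0 : ∃ c', w (true, ξ, c') = 0
    · obtain ⟨c₂, hc₂⟩ := hA0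
      refine ⟨{(true, ξ, c₂), (true, ξ, c₁)}, ?_⟩
      intro a ha b hb
      exfalso
      simp only [mem_setOf_eq, Finset.mem_insert, Finset.mem_singleton] at ha
      rcases lt_or_ge a ξ with h | h
      · have := ha (true, ξ, c₂) (Or.inl rfl)
        simp only [succFam_true, dif_pos h] at this
        omega
      · have := ha (true, ξ, c₁) (Or.inr rfl)
        simp only [succFam_true, dif_neg (not_lt.mpr h)] at this
        omega
    · push_neg at hA0
      obtain ⟨C₀, hC₀⟩ := hg (fun c => w (true, ξ, c) - 1)
      refine ⟨insert (true, ξ, c₁) (C₀.image (fun c => (true, ξ, c))), ?_⟩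
      have key : ∀ a, (∀ q ∈ insert (true, ξ, c₁) (C₀.image (fun c => (true, ξ, c))),
          succFam g emb a q = w q) →
          ∃ h : a < ξ, ∀ c ∈ C₀, g (emb ξ ⟨a, h⟩) c = w (true, ξ, c) - 1 := by
        intro a ha
        rcases lt_or_ge a ξ with h | h
        · refine ⟨h, fun c hc => ?_⟩
          have := ha (true, ξ, c) (Finset.mem_insert_of_mem (Finset.mem_image_of_mem _ hc))
          simp only [succFam_true, dif_pos h] at this
          have := hA0 c
          omega
        · have := ha (true, ξ, c₁) (Finset.mem_insert_self _ _)
          simp only [succFam_true, dif_neg (not_lt.mpr h)] at this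
          exact absurd this.symm hc₁
      intro a ha b hb
      simp only [mem_setOf_eq] at ha hb
      obtain ⟨h1, hm1⟩ := key a ha
      obtain ⟨h2, hm2⟩ := key b hb
      have := hC₀ hm1 hm2
      have := (emb ξ).injective this
      exact Subtype.mk_eq_mk.mp this
  · push_neg at hA
    by_cases hB : ∃ ξ c, w (false, ξ, c) = 0
    · obtain ⟨ξ, c, h0⟩ := hB
      obtain ⟨ξ', hξ'⟩ := nomax ξ
      refine ⟨{(false, ξ, c), (true, ξ', c₀)}, ?_⟩
      intro a ha b hb
      exfalso
      simp only [mem_setOf_eq, Finset.mem_insert, Finset.mem_singleton] at ha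
      rcases le_or_gt a ξ with h | h
      · have := ha (true, ξ', c₀) (Or.inr rfl)
        have hlt : a < ξ' := lt_of_le_of_lt h hξ'
        simp only [succFam_true, dif_pos hlt] at this
        have := hA ξ' c₀
        omega
      · have := ha (false, ξ, c) (Or.inl rfl)
        simp only [succFam_false, dif_pos h] at this
        omega
    · push_neg at hB
      have hg' := fun ξ : T => hg (fun c => w (false, ξ, c) - 1)
      choose Cc hCc using hg'
      by_cases hall : ∀ ξ : T, ∃ δ, ∀ c ∈ Cc ξ, g δ c = w (false, ξ, c) - 1
      · choose σ hσ using hall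
        obtain ⟨ξ₁, ξ₂, heq, hne⟩ := Function.not_injective_iff.mp (hbig σ)
        obtain ⟨ξ', hξ'⟩ := nomax (max ξ₁ ξ₂)
        refine ⟨insert (true, ξ', c₀) (((Cc ξ₁).image (fun c => (false, ξ₁, c))) ∪
          ((Cc ξ₂).image (fun c => (false, ξ₂, c)))), ?_⟩
        intro a ha b hb
        exfalso
        simp only [mem_setOf_eq] at ha
        rcases lt_or_ge a ξ' with h | h
        · have := ha (true, ξ', c₀) (Finset.mem_insert_self _ _)
          simp only [succFam_true, dif_pos h] at this
          have := hA ξ' c₀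
          omega
        · have h₁ : ξ₁ < a := lt_of_le_of_lt (le_max_left _ _) (lt_of_lt_of_le hξ' h)
          have h₂ : ξ₂ < a := lt_of_le_of_lt (le_max_right _ _) (lt_of_lt_of_le hξ' h)
          have m₁ : ∀ c ∈ Cc ξ₁, g (emb a ⟨ξ₁, h₁⟩) c = w (false, ξ₁, c) - 1 := by
            intro c hc
            have := ha (false, ξ₁, c) (Finset.mem_insert_of_mem
              (Finset.mem_union_left _ (Finset.mem_image_of_mem _ hc)))
            simp only [succFam_false, dif_pos h₁] at this
            have hb1 := hB ξ₁ c
            omega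
          have m₂ : ∀ c ∈ Cc ξ₂, g (emb a ⟨ξ₂, h₂⟩) c = w (false, ξ₂, c) - 1 := by
            intro c hc
            have := ha (false, ξ₂, c) (Finset.mem_insert_of_mem
              (Finset.mem_union_right _ (Finset.mem_image_of_mem _ hc)))
            simp only [succFam_false, dif_pos h₂] at this
            have hb2 := hB ξ₂ c
            omega
          have e₁ : emb a ⟨ξ₁, h₁⟩ = σ ξ₁ := hCc ξ₁ m₁ (hσ ξ₁)
          have e₂ : emb a ⟨ξ₂, h₂⟩ = σ ξ₂ := hCc ξ₂ m₂ (hσ ξ₂)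
          have : emb a ⟨ξ₁, h₁⟩ = emb a ⟨ξ₂, h₂⟩ := by rw [e₁, e₂, heq]
          have := (emb a).injective this
          exact hne (Subtype.mk_eq_mk.mp this)
      · push_neg at hall
        obtain ⟨ξ, hξ⟩ := hall
        obtain ⟨ξ', hξ'⟩ := nomax ξ
        refine ⟨insert (true, ξ', c₀) ((Cc ξ).image (fun c => (false, ξ, c))), ?_⟩
        intro a ha b hb
        exfalso
        simp only [mem_setOf_eq] at ha
        rcases lt_or_ge a ξ' with h | h
        · have := ha (true, ξ', c₀) (Finset.mem_insert_self _ _)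
          simp only [succFam_true, dif_pos h] at this
          have := hA ξ' c₀
          omega
        · have hlt : ξ < a := lt_of_lt_of_le hξ' h
          obtain ⟨c, hc, hcne⟩ := hξ (emb a ⟨ξ, hlt⟩)
          have := ha (false, ξ, c) (Finset.mem_insert_of_mem (Finset.mem_image_of_mem _ hc))
          simp only [succFam_false, dif_pos hlt] at this
          have hb3 := hB ξ c
          omega

/-- The family for singular cardinals: a disjoint sum of families, tagged
by an outer family. -/
noncomputable def sumFam {ι₀ I0 ιb : Type u} (ιs Is : ιb → Type u)
    (g₀ : ι₀ → I0 → ℕ) (gs : ∀ b, ιs b → Is b → ℕ) (tag : ιb → ι₀) :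
    (Σ b, ιs b) → (I0 ⊕ Σ b, Is b) → ℕ :=
  open scoped Classical in fun p q =>
    match q with
    | .inl c => g₀ (tag p.1) c
    | .inr q => if h : p.1 = q.1 then gs q.1 (h ▸ p.2) q.2 else 0

lemma cdfam_sum {ι₀ I0 ιb : Type u} (ιs Is : ιb → Type u)
    (g₀ : ι₀ → I0 → ℕ) (gs : ∀ b, ιs b → Is b → ℕ) (tag : ιb → ι₀)
    (hg₀ : CDFam g₀) (hgs : ∀ b, CDFam (gs b)) (htag : Function.Injective tag) :
    CDFam (sumFam ιs Is g₀ gs tag) := by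
  classical
  intro w
  obtain ⟨C₀, hC₀⟩ := hg₀ (fun c => w (.inl c))
  by_cases hex : ∃ b : ιb, ∀ c ∈ C₀, g₀ (tag b) c = w (.inl c)
  · obtain ⟨b₀, hb₀⟩ := hex
    obtain ⟨C₁, hC₁⟩ := hgs b₀ (fun c => w (.inr ⟨b₀, c⟩))
    refine ⟨(C₀.image .inl) ∪ (C₁.image (fun c => .inr ⟨b₀, c⟩)), ?_⟩
    have key : ∀ p : (Σ b, ιs b), (∀ q ∈ (C₀.image Sum.inl) ∪ (C₁.image (fun c => Sum.inr ⟨b₀, c⟩)),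
        sumFam ιs Is g₀ gs tag p q = w q) →
        ∃ h : p.1 = b₀, ∀ c ∈ C₁, gs b₀ (h ▸ p.2) c = w (.inr ⟨b₀, c⟩) := by
      rintro ⟨b, d⟩ hp
      have hout : ∀ c ∈ C₀, g₀ (tag b) c = w (.inl c) := by
        intro c hc
        exact hp (.inl c) (Finset.mem_union_left _ (Finset.mem_image_of_mem _ hc))
      have hbb : b = b₀ := htag (hC₀ hout hb₀)
      subst hbb
      refine ⟨rfl, fun c hc => ?_⟩
      have := hp (.inr ⟨b, c⟩) (Finset.mem_union_right _ (Finset.mem_image_of_mem _ hc))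
      simpa [sumFam] using this
    rintro p hp p' hp'
    simp only [mem_setOf_eq] at hp hp'
    obtain ⟨h1, hm1⟩ := key p hp
    obtain ⟨h2, hm2⟩ := key p' hp'
    obtain ⟨b, d⟩ := p; obtain ⟨b', d'⟩ := p'
    cases h1; cases h2
    have := hC₁ hm1 hm2
    simp only at this
    rw [this]
  · refine ⟨C₀.image .inl, ?_⟩
    rintro p hp p' hp'
    exfalso
    simp only [mem_setOf_eq] at hp
    refine hex ⟨p.1, fun c hc => ?_⟩
    exact hp (.inl c) (Finset.mem_image_of_mem _ hc)

theorem exists_cdfam : ∀ κ : Cardinal.{u}, ℵ₀ ≤ κ →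
    (∀ μ, μ ≤ κ → ℵ₀ < μ → μ.IsRegular → ∃ ν < μ, Order.succ ν = μ) →
    ∃ (ι : Type u) (I : Type u) (F : ι → I → ℕ), #ι = κ ∧ #I = κ ∧ CDFam F := by
  intro κ
  induction κ using WellFoundedLT.induction with
  | _ κ IH =>
  intro hκ hreg
  rcases eq_or_lt_of_le hκ with heq | hlt
  · exact ⟨ULift ℕ, ULift ℕ, _, by simp [← heq], by simp [← heq], cdfam_base⟩
  by_cases hr : κ.IsRegular
  · -- successor case
    obtain ⟨ν, hν, hsucc⟩ := hreg κ le_rfl hlt hr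
    have hν0 : ℵ₀ ≤ ν := by
      by_contra h
      push_neg at h
      exact absurd (hsucc ▸ Order.succ_le_of_lt h) (not_le.mpr hlt)
    obtain ⟨ιl, Il, g, hι, hI, hcd⟩ := IH ν hν hν0
      (fun μ hμ => hreg μ (hμ.trans hν.le))
    set T := κ.ord.ToType with hT
    have hTcard : #T = κ := Cardinal.mk_ord_toType κ
    have hlim := Cardinal.isSuccLimit_ord hκ
    haveI : NoMaxOrder T := Ordinal.toType_noMax_of_succ_lt (fun a ha => hlim.succ_lt ha)
    have nomax : ∀ t : T, ∃ t', t < t' := fun t => exists_gt t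
    have hseg : ∀ t : T, #{x : T // x < t} ≤ #ιl := by
      intro t
      rw [hι]
      have h1 : #(Set.Iio t) < Order.succ ν :=
        lt_of_lt_of_le (Cardinal.mk_Iio_ord_toType t) (le_of_eq hsucc.symm)
      exact Order.lt_succ_iff.mp h1
    have emb : ∀ t : T, {x : T // x < t} ↪ ιl :=
      fun t => (Cardinal.le_def _ _ |>.mp (hseg t)).some
    have hbig : ∀ f : T → ιl, ¬ Function.Injective f := by
      intro f hf
      have : #T ≤ #ιl := Cardinal.mk_le_of_injective hf
      rw [hTcard, hι] at this
      exact absurd (lt_of_lt_of_le (hsucc ▸ Order.lt_succ_of_not_isMax (not_isMax ν)) this)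
        (lt_irrefl ν)
    have hν0' : ν ≠ 0 := ne_of_gt (aleph0_pos.trans_le hν0)
    have c₀ : Il := Classical.choice (by
      rw [← Cardinal.mk_ne_zero_iff, hI]
      exact hν0')
    refine ⟨T, Bool × T × Il, succFam g emb, hTcard, ?_, cdfam_succ g hcd c₀ nomax emb hbig⟩
    · have : #(Bool × T × Il) = 2 * (κ * ν) := by
        simp [Cardinal.mk_prod, hTcard, hI, Cardinal.mk_bool]
      have h2 : (2 : Cardinal) ≤ κ := by
        have : (2 : Cardinal) < ℵ₀ := by exact_mod_cast Cardinal.nat_lt_aleph0 2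
        exact this.le.trans hκ
      rw [this, Cardinal.mul_eq_left hκ hν.le hν0', Cardinal.mul_eq_right hκ h2 (by norm_num)]
  · -- singular case
    set μ := κ.ord.cof with hμ
    have hμinf : ℵ₀ ≤ μ := Ordinal.aleph0_le_cof.mpr (Cardinal.isSuccLimit_ord hκ)
    have hμlt : μ < κ := lt_of_le_of_ne (Ordinal.cof_ord_le κ) (fun h => hr ⟨hκ, h.ge⟩)
    haveI : IsWellOrder κ.ord.ToType (· < ·) := ⟨⟩
    obtain ⟨S, hSunb, hScard⟩ := Order.exists_cof_eq (α := κ.ord.ToType)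
    rw [Ordinal.cof_toType] at hScard
    have hlam : ∀ s : S, ℵ₀ ≤ #(Set.Iic (s : κ.ord.ToType)) ⊔ μ ∧
        #(Set.Iic (s : κ.ord.ToType)) ⊔ μ < κ := by
      intro s
      constructor
      · exact le_sup_of_le_right hμinf
      · refine max_lt ?_ hμlt
        have h1 : #(Set.Iic (s : κ.ord.ToType)) ≤ #(Set.Iio (s : κ.ord.ToType)) + 1 := by
          rw [← Set.Iio_insert]
          exact Cardinal.mk_insert_le
        exact lt_of_le_of_lt h1 (Cardinal.add_lt_of_lt hκ (Cardinal.mk_Iio_ord_toType _)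
          (lt_of_lt_of_le Cardinal.one_lt_aleph0 hκ))
    have hrec : ∀ s : S, ∃ (ι : Type u) (I : Type u) (F : ι → I → ℕ),
        #ι = (#(Set.Iic (s : κ.ord.ToType)) ⊔ μ) ∧ #I = (#(Set.Iic (s : κ.ord.ToType)) ⊔ μ) ∧
        CDFam F := by
      intro s
      exact IH _ (hlam s).2 (hlam s).1 (fun μ' hμ' => hreg μ' (hμ'.trans (hlam s).2.le))
    choose ιs Is Fs hιs hIs hcds using hrec
    obtain ⟨ι₀, I0, g₀, hι₀, hI0, hcd₀⟩ := IH μ hμlt hμinf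
      (fun μ' hμ' => hreg μ' (hμ'.trans hμlt.le))
    have tage : S ≃ ι₀ := (Cardinal.eq.mp (hScard.trans hι₀.symm)).some
    have hsum : (Cardinal.sum fun s : S => #(Set.Iic (s : κ.ord.ToType)) ⊔ μ) = κ := by
      apply le_antisymm
      · calc Cardinal.sum (fun s : S => #(Set.Iic (s : κ.ord.ToType)) ⊔ μ)
            ≤ Cardinal.sum (fun _ : S => κ) := Cardinal.sum_le_sum _ _ (fun s => (hlam s).2.le)
          _ = #S * κ := Cardinal.sum_const' _ _
          _ = κ := by
              rw [hScard]
              exact Cardinal.mul_eq_right hκ hμlt.le (ne_of_gt (aleph0_pos.trans_le hμinf))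
      · have hcover : (Set.univ : Set κ.ord.ToType) ⊆ ⋃ s : S, Set.Iic (s : κ.ord.ToType) := by
          intro x _
          obtain ⟨s, hs, hns⟩ := hSunb x
          exact Set.mem_iUnion.mpr ⟨⟨s, hs⟩, hns⟩
        calc κ = #κ.ord.ToType := (Cardinal.mk_ord_toType κ).symm
          _ = #(Set.univ : Set κ.ord.ToType) := Cardinal.mk_univ.symm
          _ ≤ #(⋃ s : S, Set.Iic (s : κ.ord.ToType)) := Cardinal.mk_le_mk_of_subset hcover
          _ ≤ Cardinal.sum (fun s : S => #(Set.Iic (s : κ.ord.ToType))) :=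
              Cardinal.mk_iUnion_le_sum_mk
          _ ≤ Cardinal.sum (fun s : S => #(Set.Iic (s : κ.ord.ToType)) ⊔ μ) :=
              Cardinal.sum_le_sum _ _ (fun s => le_sup_left)
    refine ⟨Σ s : S, ιs s, I0 ⊕ Σ s : S, Is s, sumFam ιs Is g₀ Fs (fun s => tage s),
      ?_, ?_, cdfam_sum ιs Is g₀ Fs _ hcd₀ hcds (fun a b hab => tage.injective hab)⟩
    · rw [Cardinal.mk_sigma]
      rw [show (fun s : S => #(ιs s)) = (fun s : S => #(Set.Iic (s : κ.ord.ToType)) ⊔ μ)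
        from funext hιs]
      exact hsum
    · rw [Cardinal.mk_sum, Cardinal.mk_sigma, Cardinal.lift_id, Cardinal.lift_id]
      rw [show (fun s : S => #(Is s)) = (fun s : S => #(Set.Iic (s : κ.ord.ToType)) ⊔ μ)
        from funext hIs]
      rw [hsum, hI0]
      exact Cardinal.add_eq_right hκ hμlt.le

lemma closedDiscrete_of_isolated {X : Type u} [TopologicalSpace X] [T1Space X] {D : Set X}
    (h : ∀ y : X, ∃ U : Set X, IsOpen U ∧ y ∈ U ∧ (U ∩ D).Subsingleton) :
    ClosedDiscrete D := by
  constructor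
  · rw [← closure_subset_iff_isClosed]
    intro y hy
    obtain ⟨U, hUo, hyU, hUD⟩ := h y
    have h1 : y ∈ closure (U ∩ D) := hUo.inter_closure ⟨hyU, hy⟩
    rw [IsClosed.closure_eq (hUD.finite.isClosed)] at h1
    exact h1.2
  · rw [discreteTopology_iff_isOpen_singleton]
    intro d
    obtain ⟨U, hUo, hdU, hUD⟩ := h ↑d
    have hop : IsOpen ((Subtype.val : D → X) ⁻¹' U) := hUo.preimage continuous_subtype_val
    have : ({d} : Set D) = (Subtype.val : D → X) ⁻¹' U := by
      ext z
      simp only [mem_singleton_iff, mem_preimage]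
      constructor
      · rintro rfl; exact hdU
      · intro hz
        exact Subtype.ext (hUD ⟨hz, z.2⟩ ⟨hdU, d.2⟩)
    rw [this]
    exact hop

lemma exists_discrete_seq {X : Type u} [TopologicalSpace X] [T1Space X]
    (hncc : ¬ CountablyCompact X) :
    ∃ e : ℕ → X, Function.Injective e ∧
      ∀ x : X, ∃ U : Set X, IsOpen U ∧ x ∈ U ∧ ∀ n, e n ∈ U → e n = x := by
  unfold CountablyCompact at hncc
  push_neg at hncc
  obtain ⟨𝒰, hcnt, hopen, hcov, hnofin⟩ := hncc
  have hne : 𝒰.Nonempty := by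
    rcases Set.eq_empty_or_nonempty 𝒰 with h | h
    · exact absurd (h ▸ hcov) (hnofin ∅ (empty_subset _) finite_empty)
    · exact h
  obtain ⟨U, hU⟩ := hcnt.exists_eq_range hne
  have hx : ∀ n : ℕ, ∃ z : X, ∀ k ≤ n, z ∉ U k := by
    intro n
    by_contra h
    push_neg at h
    refine hnofin (U '' {k | k ≤ n}) ?_ (((Set.finite_Iic n).image _)) ?_
    · rw [hU]; exact image_subset_range _ _
    · apply eq_univ_of_univ_subset
      intro z _
      obtain ⟨k, hk, hz⟩ := h z
      exact ⟨U k, ⟨k, hk, rfl⟩, hz⟩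
  choose x hxs using hx
  have hmem : ∀ y : X, ∃ m, y ∈ U m := by
    intro y
    have h1 : y ∈ ⋃₀ 𝒰 := hcov ▸ mem_univ y
    rw [hU] at h1
    obtain ⟨V, ⟨m, rfl⟩, hyV⟩ := h1
    exact ⟨m, hyV⟩
  have hEinf : (Set.range x).Infinite := by
    intro hfin
    choose m hm using hmem
    set M := hfin.toFinset.sup m with hM
    have h1 : x M ∈ range x := mem_range_self _
    have hmx : m (x M) ≤ M := Finset.le_sup (hfin.mem_toFinset.mpr h1)
    exact hxs M (m (x M)) hmx (hm (x M))
  have hfinU : ∀ k : ℕ, (U k ∩ range x).Finite := by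
    intro k
    apply Set.Finite.subset ((Set.finite_Iio k).image x)
    rintro z ⟨hzU, n, rfl⟩
    refine ⟨n, ?_, rfl⟩
    simp only [mem_Iio]
    by_contra hnk
    exact hxs n k (not_lt.mp hnk) hzU
  set e : ℕ → X := fun n => ((Set.Infinite.natEmbedding (Set.range x) hEinf) n).1 with he
  refine ⟨e, ?_, ?_⟩
  · intro a b hab
    exact (Set.Infinite.natEmbedding (Set.range x) hEinf).injective (Subtype.ext hab)
  · intro x0
    obtain ⟨m0, hm0⟩ := hmem x0
    refine ⟨U m0 \ ((U m0 ∩ range x) \ {x0}), ?_, ⟨hm0, fun h => h.2 rfl⟩, ?_⟩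
    · exact (hopen (U m0) (by rw [hU]; exact mem_range_self _)).sdiff
        (((hfinU m0).subset diff_subset).isClosed)
    · intro n hn
      by_contra hne'
      exact hn.2 ⟨⟨hn.1, ((Set.Infinite.natEmbedding (Set.range x) hEinf) n).2⟩, hne'⟩

lemma exists_dense_card (X : Type u) [TopologicalSpace X] :
    ∃ D : Set X, Dense D ∧ #D = density X :=
by
  have h : density X ∈ {c | ∃ D : Set X, Dense D ∧ #D = c} :=
    csInf_mem ⟨#(Set.univ : Set X), Set.univ, dense_univ, rfl⟩
  exact h

lemma aleph0_le_density {X : Type u} [TopologicalSpace X] [T1Space X]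
    (hncc : ¬ CountablyCompact X) : ℵ₀ ≤ density X := by
  by_contra h
  push_neg at h
  obtain ⟨D, hD, hcard⟩ := exists_dense_card X
  have hfin : D.Finite := Cardinal.lt_aleph0_iff_set_finite.mp (hcard ▸ h)
  have huniv : D = Set.univ := by rw [← hfin.isClosed.closure_eq, hD.closure_eq]
  have hXfin : Finite X := Set.finite_univ_iff.mp (huniv ▸ hfin)
  apply hncc
  intro 𝒰 _ hop hcov
  have hcomp : IsCompact (univ : Set X) := Set.finite_univ.isCompact
  have hsub : (univ : Set X) ⊆ ⋃ V : 𝒰, (V : Set X) := by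
    rw [← sUnion_eq_iUnion]
    exact hcov.ge
  obtain ⟨t, ht⟩ := hcomp.elim_finite_subcover (fun V : 𝒰 => (V : Set X))
    (fun V => hop V V.2) hsub
  refine ⟨((↑) : 𝒰 → Set X) '' ↑t, ?_, ?_, ?_⟩
  · rintro V ⟨W, _, rfl⟩; exact W.2
  · exact t.finite_toSet.image _
  · apply eq_univ_of_univ_subset
    intro z hz
    obtain ⟨V, hVt, hzV⟩ := mem_iUnion₂.mp (ht hz)
    exact ⟨V, ⟨V, hVt, rfl⟩, hzV⟩

theorem key_construction {X : Type u} [TopologicalSpace X] [T1Space X]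
    {I₀ ι I : Type u}
    (e : ℕ → X) (einj : Function.Injective e)
    (V : X → Set X) (hVo : ∀ x, IsOpen (V x)) (hVmem : ∀ x, x ∈ V x)
    (hViso : ∀ x k, e k ∈ V x → e k = x)
    (s : I₀ → X) (hs : Dense (Set.range s))
    (F : ι → I → ℕ) (hcd : CDFam F)
    (ψ : I₀ ≃ I × ℕ)
    (emb : (Σ fs : Finset I₀, ({c // c ∈ fs} → I₀)) ↪ ι) :
    ∃ D : ℕ → Set (I₀ → X), (∀ n, ClosedDiscrete (D n)) ∧ Dense (⋃ n, D n) := by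
  classical
  set hf : (Σ fs : Finset I₀, ({c // c ∈ fs} → I₀)) → (I₀ → X) :=
    fun p c => if hc : c ∈ p.1 then s (p.2 ⟨c, hc⟩) else e (F (emb p) (ψ c).1) with hhf
  refine ⟨fun n => hf '' {p | p.1.card ≤ n}, ?_, ?_⟩
  · intro n
    apply closedDiscrete_of_isolated
    intro y
    set B : Set I₀ := {c | y c ∉ Set.range e} with hB
    by_cases hbig : ∃ fs : Finset I₀, ↑fs ⊆ B ∧ fs.card = n + 1
    · -- Case 1 : many coordinates outside the closed discrete set kill everything
      obtain ⟨fs, hfsB, hfscard⟩ := hbig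
      refine ⟨⋂ c ∈ fs, (fun f => f c) ⁻¹' (V (y c)),
        isOpen_biInter_finset (fun c _ => (hVo _).preimage (continuous_apply c)),
        mem_iInter₂.mpr (fun c _ => hVmem (y c)), ?_⟩
      intro a ha b hb
      exfalso
      obtain ⟨p, hpcard, rfl⟩ := ha.2
      have hsub : fs ⊆ p.1 := by
        intro c hcfs
        by_contra hcp
        have h1 : hf p c ∈ V (y c) := mem_iInter₂.mp ha.1 c hcfs
        have h2 : hf p c = e (F (emb p) (ψ c).1) := by simp only [hhf, dif_neg hcp]
        rw [h2] at h1
        have h3 := hViso (y c) _ h1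
        exact hfsB hcfs ⟨_, h3⟩
      have h5 := Finset.card_le_card hsub
      simp only [mem_setOf_eq] at hpcard
      omega
    · -- Case 2 : few bad coordinates; use the closed discrete family
      push_neg at hbig
      have hBsmall : ∀ fs : Finset I₀, ↑fs ⊆ B → fs.card ≤ n := by
        intro fs hfs
        by_contra hgt
        push_neg at hgt
        obtain ⟨t, hts, htcard⟩ := Finset.exists_subset_card_eq (Nat.succ_le_of_lt hgt)
        exact hbig t ((Finset.coe_subset.mpr hts).trans hfs) htcard
      set m : I₀ → ℕ := fun c => if hc : ∃ k, e k = y c then hc.choose else 0 with hmdef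
      have hm : ∀ c, c ∉ B → e (m c) = y c := by
        intro c hc
        simp only [hB, mem_setOf_eq, not_not] at hc
        obtain ⟨k, hk⟩ := hc
        have hex : ∃ k, e k = y c := ⟨k, hk⟩
        simp only [hmdef, dif_pos hex]
        exact hex.choose_spec
      set N := 4 * n + 1 with hN
      set P : I → ℕ → Prop := fun β v =>
        N - 2*n ≤ ((Finset.range N).filter
          (fun i => ψ.symm (β, i) ∉ B ∧ m (ψ.symm (β, i)) = v)).card with hP
      have hPuniq : ∀ β v v', P β v → P β v' → v = v' := by
        intro β v v' hv hv'
        by_contra hne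
        set s1 := (Finset.range N).filter (fun i => ψ.symm (β, i) ∉ B ∧ m (ψ.symm (β, i)) = v)
        set s2 := (Finset.range N).filter (fun i => ψ.symm (β, i) ∉ B ∧ m (ψ.symm (β, i)) = v')
        have hdis : Disjoint s1 s2 := by
          rw [Finset.disjoint_left]
          intro i hi1 hi2
          rw [Finset.mem_filter] at hi1 hi2
          exact hne (hi1.2.2.symm.trans hi2.2.2)
        have hv1 : N - 2*n ≤ s1.card := hv
        have hv2 : N - 2*n ≤ s2.card := hv'
        have hcup : s1.card + s2.card ≤ N := by
          rw [← Finset.card_union_of_disjoint hdis]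
          calc (s1 ∪ s2).card ≤ (Finset.range N).card :=
                Finset.card_le_card (Finset.union_subset
                  (Finset.filter_subset _ _) (Finset.filter_subset _ _))
            _ = N := Finset.card_range N
        omega
      set w : I → ℕ := fun β => if hv : ∃ v, P β v then hv.choose else 0 with hw
      obtain ⟨C, hC⟩ := hcd w
      have key : ∀ p : (Σ fs : Finset I₀, ({c // c ∈ fs} → I₀)), p.1.card ≤ n →
          hf p ∈ ⋂ q ∈ C ×ˢ Finset.range N,
            {f : I₀ → X | ψ.symm (q.1, q.2) ∈ B ∨
              f (ψ.symm (q.1, q.2)) ∈ V (y (ψ.symm (q.1, q.2)))} →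
          ∀ β ∈ C, F (emb p) β = w β := by
        intro p hpc hin β hβ
        set v₀ := F (emb p) β with hv₀
        have hslot : ∀ i, i ∈ Finset.range N → ψ.symm (β, i) ∉ B → ψ.symm (β, i) ∉ p.1 →
            (ψ.symm (β, i) ∉ B ∧ m (ψ.symm (β, i)) = v₀) := by
          intro i hi hnB hnp
          refine ⟨hnB, ?_⟩
          have h1 : hf p (ψ.symm (β, i)) = e v₀ := by
            simp only [hhf, dif_neg hnp, hv₀, Equiv.apply_symm_apply]
          have h2 : hf p (ψ.symm (β, i)) ∈ V (y (ψ.symm (β, i))) := by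
            have h3 := mem_iInter₂.mp hin (β, i) (Finset.mem_product.mpr ⟨hβ, hi⟩)
            rcases h3 with hc | hc
            · exact absurd hc hnB
            · exact hc
          rw [h1] at h2
          have h3 := hViso (y (ψ.symm (β, i))) _ h2
          have h4 := hm _ hnB
          exact einj (h4.trans h3.symm)
        have hinj : Function.Injective (fun i : ℕ => ψ.symm (β, i)) := by
          intro a b hab
          have := ψ.symm.injective hab
          exact (Prod.ext_iff.mp this).2
        have hf1 : ((Finset.range N).filter (fun i => ψ.symm (β, i) ∈ B)).card ≤ n := by
          have himg : ↑(((Finset.range N).filter (fun i => ψ.symm (β, i) ∈ B)).image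
              (fun i => ψ.symm (β, i))) ⊆ B := by
            intro c hc
            simp only [Finset.coe_image, Set.mem_image, Finset.mem_coe, Finset.mem_filter] at hc
            obtain ⟨i, ⟨_, hiB⟩, rfl⟩ := hc
            exact hiB
          have := hBsmall _ himg
          rwa [Finset.card_image_of_injective _ hinj] at this
        have hf2 : ((Finset.range N).filter (fun i => ψ.symm (β, i) ∈ p.1)).card ≤ n := by
          have himg : (((Finset.range N).filter (fun i => ψ.symm (β, i) ∈ p.1)).image
              (fun i => ψ.symm (β, i))) ⊆ p.1 := by
            intro c hc
            simp only [Finset.mem_image, Finset.mem_filter] at hc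
            obtain ⟨i, ⟨_, hip⟩, rfl⟩ := hc
            exact hip
          calc ((Finset.range N).filter (fun i => ψ.symm (β, i) ∈ p.1)).card
              = (((Finset.range N).filter (fun i => ψ.symm (β, i) ∈ p.1)).image
                (fun i => ψ.symm (β, i))).card :=
                (Finset.card_image_of_injective _ hinj).symm
            _ ≤ p.1.card := Finset.card_le_card himg
            _ ≤ n := hpc
        have hgood : P β v₀ := by
          set f1 := (Finset.range N).filter (fun i => ψ.symm (β, i) ∈ B)
          set f2 := (Finset.range N).filter (fun i => ψ.symm (β, i) ∈ p.1)
          have hsub2 : (Finset.range N) \ (f1 ∪ f2) ⊆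
              (Finset.range N).filter (fun i => ψ.symm (β, i) ∉ B ∧ m (ψ.symm (β, i)) = v₀) := by
            intro i hi
            rw [Finset.mem_sdiff, Finset.mem_union] at hi
            obtain ⟨hiN, hi2⟩ := hi
            push_neg at hi2
            have hnB : ψ.symm (β, i) ∉ B := by
              intro hc; exact hi2.1 (Finset.mem_filter.mpr ⟨hiN, hc⟩)
            have hnp : ψ.symm (β, i) ∉ p.1 := by
              intro hc; exact hi2.2 (Finset.mem_filter.mpr ⟨hiN, hc⟩)
            exact Finset.mem_filter.mpr ⟨hiN, hslot i hiN hnB hnp⟩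
          have hc1 : (Finset.range N).card - (f1 ∪ f2).card ≤
              ((Finset.range N) \ (f1 ∪ f2)).card := Finset.le_card_sdiff _ _
          have hc2 : (f1 ∪ f2).card ≤ f1.card + f2.card := Finset.card_union_le _ _
          have hc3 := Finset.card_le_card hsub2
          have hc4 : (Finset.range N).card = N := Finset.card_range N
          show N - 2*n ≤ _
          omega
        have hex : ∃ v, P β v := ⟨v₀, hgood⟩
        have : w β = hex.choose := dif_pos hex
        rw [this]
        exact hPuniq β v₀ hex.choose hgood hex.choose_spec
      refine ⟨⋂ q ∈ C ×ˢ Finset.range N,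
        {f : I₀ → X | ψ.symm (q.1, q.2) ∈ B ∨
          f (ψ.symm (q.1, q.2)) ∈ V (y (ψ.symm (q.1, q.2)))}, ?_, ?_, ?_⟩
      · apply isOpen_biInter_finset
        intro q _
        by_cases hq : ψ.symm (q.1, q.2) ∈ B
        · have : {f : I₀ → X | ψ.symm (q.1, q.2) ∈ B ∨
              f (ψ.symm (q.1, q.2)) ∈ V (y (ψ.symm (q.1, q.2)))} = Set.univ := by
            apply eq_univ_of_forall
            intro f
            exact Or.inl hq
          rw [this]; exact isOpen_univ
        · have : {f : I₀ → X | ψ.symm (q.1, q.2) ∈ B ∨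
              f (ψ.symm (q.1, q.2)) ∈ V (y (ψ.symm (q.1, q.2)))} =
              (fun f : I₀ → X => f (ψ.symm (q.1, q.2))) ⁻¹' V (y (ψ.symm (q.1, q.2))) := by
            ext f
            simp only [mem_setOf_eq, mem_preimage]
            exact ⟨fun h => h.resolve_left hq, fun h => Or.inr h⟩
          rw [this]
          exact (hVo _).preimage (continuous_apply _)
      · exact mem_iInter₂.mpr (fun q _ => Or.inr (hVmem _))
      · intro a ha b hb
        obtain ⟨p, hp, rfl⟩ := ha.2
        obtain ⟨p', hp', rfl⟩ := hb.2
        have h1 := key p hp ha.1 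
        have h2 := key p' hp' hb.1
        have := hC h1 h2
        rw [emb.injective this]
  · rw [dense_iff_inter_open]
    intro O hO hOne
    obtain ⟨f0, hf0⟩ := hOne
    obtain ⟨fs, uu, huu, hsub⟩ := isOpen_pi_iff.mp hO f0 hf0
    have hpick : ∀ c : {c // c ∈ fs}, ∃ a : I₀, s a ∈ uu ↑c := by
      intro c
      obtain ⟨z, hz1, hz2⟩ := hs.exists_mem_open (huu ↑c c.2).1 ⟨f0 ↑c, (huu ↑c c.2).2⟩
      obtain ⟨a, rfl⟩ := hz1
      exact ⟨a, hz2⟩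
    choose g hg using hpick
    refine ⟨hf ⟨fs, g⟩, ?_, ?_⟩
    · apply hsub
      intro c hc
      have hcf : c ∈ fs := hc
      have h1 : hf ⟨fs, g⟩ c = s (g ⟨c, hcf⟩) := by simp only [hhf, dif_pos hcf]
      rw [h1]
      exact hg ⟨c, hcf⟩
    · refine mem_iUnion.mpr ⟨fs.card, mem_image_of_mem _ ?_⟩
      simp only [mem_setOf_eq]
      exact le_refl _

/-- If `X` is not countably compact and no cardinal `μ ≤ d(X)` is weakly
inaccessible, then `X^{d(X)}` is `e`-separable. -/
theorem eSeparable_pow_density_of_not_countablyCompact {X : Type u} [TopologicalSpace X]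
    [T1Space X] (hncc : ¬ CountablyCompact X)
    (hnwi : ∀ μ : Cardinal.{u}, μ ≤ density X → ℵ₀ < μ → μ.IsRegular →
      ∃ ν < μ, Order.succ ν = μ) :
    ESeparable ((density X).out → X) := by
  classical
  set κ := density X with hκdef
  have hκ : ℵ₀ ≤ κ := aleph0_le_density hncc
  have hκ0 : κ ≠ 0 := ne_of_gt (aleph0_pos.trans_le hκ)
  obtain ⟨e, einj, hiso⟩ := exists_discrete_seq hncc
  choose V hVo hVmem hViso using hiso
  obtain ⟨ι, I, F, hι, hI, hcd⟩ := exists_cdfam κ hκ hnwi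
  have hout : #(κ.out) = κ := Cardinal.mk_out κ
  haveI hinf : Infinite κ.out := Cardinal.infinite_iff.mpr (by rw [hout]; exact hκ)
  have hψc : #(κ.out) = #(I × ℕ) := by
    rw [hout]
    have h2 : #(I × ℕ) = κ * ℵ₀ := by
      simp [Cardinal.mk_prod, hI]
    rw [h2]
    exact (Cardinal.mul_eq_left hκ hκ Cardinal.aleph0_ne_zero).symm
  have ψ : κ.out ≃ I × ℕ := (Cardinal.eq.mp hψc).some
  obtain ⟨Dd, hDd, hDdcard⟩ := exists_dense_card X
  have heqv : #(κ.out) = #Dd := by rw [hout, hκdef, ← hDdcard]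
  have eqv : κ.out ≃ Dd := (Cardinal.eq.mp heqv).some
  set s : κ.out → X := fun a => (eqv a : X) with hsdef
  have hs : Dense (Set.range s) := by
    have hr : Set.range s = Dd := by
      ext z
      constructor
      · rintro ⟨a, rfl⟩; exact (eqv a).2
      · intro hz; exact ⟨eqv.symm ⟨z, hz⟩, by simp [hsdef]⟩
    rw [hr]; exact hDd
  have hPat : #(Σ fs : Finset κ.out, ({c // c ∈ fs} → κ.out)) ≤ κ := by
    rw [Cardinal.mk_sigma]
    calc Cardinal.sum (fun fs : Finset κ.out => #({c // c ∈ fs} → κ.out))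
        ≤ Cardinal.sum (fun _ : Finset κ.out => κ) := by
          apply Cardinal.sum_le_sum
          intro fs
          have h1 : #({c // c ∈ fs} → κ.out) = #(κ.out) ^ (fs.card : Cardinal) := by
            rw [← Cardinal.power_def, Cardinal.mk_coe_finset]
          rw [h1, hout, Cardinal.power_natCast]
          exact Cardinal.power_nat_le hκ
      _ = #(Finset κ.out) * κ := Cardinal.sum_const' _ _
      _ = κ * κ := by rw [Cardinal.mk_finset_of_infinite, hout]
      _ = κ := Cardinal.mul_eq_left hκ le_rfl hκ0
  have emb : (Σ fs : Finset κ.out, ({c // c ∈ fs} → κ.out)) ↪ ι :=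
    (Cardinal.le_def _ _ |>.mp (hPat.trans_eq hι.symm)).some
  exact key_construction e einj V hVo hVmem hViso s hs F hcd ψ emb
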